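/- For a reduced word w = s_{i_1}···s_{i_r}, the coefficient c_{w,v} in Y_w = Σ_v c_{w,v} δ_v equals (−1)^{ℓ(w)−ℓ(v)} times the sum, over all subsequences (j_1,...,j_s) of (i_1,...,i_r) with s_{j_1}···s_{j_s} = v (not necessarily reduced), of the product ∏_{k} β_{k,𝐣}^{-1}, where β_{k,𝐣} is the image of α_{i_k} under the product of the simple reflections from the subsequence appearing strictly before position k. -/

import Mathlib

lemma ringaut_inverse {Q : Type*} [CommRing Q] (e : RingAut Q) (x : Q) :
    Ring.inverse (e x) = e (Ring.inverse x) := by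
  by_cases h : IsUnit x
  · rcases h with ⟨u, rfl⟩
    have h1 : e ↑u = ↑(Units.map (e.toRingHom.toMonoidHom) u) := rfl
    rw [h1, Ring.inverse_unit, Ring.inverse_unit, Units.coe_map_inv]
    rfl
  · have h2 : ¬ IsUnit (e x) := fun hu => h (by simpa using hu.map e.symm.toRingHom.toMonoidHom)
    rw [Ring.inverse_non_unit _ h, Ring.inverse_non_unit _ h2, map_zero]



open Classical in
lemma finset_fin_succ_sum {n : ℕ} {M : Type*} [AddCommMonoid M] (G : Finset (Fin (n+1)) → M) :
    ∑ E' : Finset (Fin (n+1)), G E' =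
    ∑ E : Finset (Fin n),
      (G (insert 0 (E.map (Fin.succEmb n))) + G (E.map (Fin.succEmb n))) := by
  have h0 : ∀ S : Finset (Fin n), (0 : Fin (n+1)) ∉ S.map (Fin.succEmb n) := by
    intro S hmem
    rcases Finset.mem_map.mp hmem with ⟨a, _, ha⟩
    exact Fin.succ_ne_zero a ha
  set e : Bool × Finset (Fin n) → Finset (Fin (n+1)) :=
    fun p => if p.1 then insert 0 (p.2.map (Fin.succEmb n)) else p.2.map (Fin.succEmb n) with he
  have hinj : Function.Injective e := by
    rintro ⟨b, E⟩ ⟨b', E'⟩ h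
    have hmapinj : Function.Injective (fun S : Finset (Fin n) => S.map (Fin.succEmb n)) :=
      fun S S' hSS => Finset.map_injective _ hSS
    cases b <;> cases b' <;> simp only [he, if_true, if_false, Bool.false_eq_true] at h
    · simp [hmapinj h]
    · exact absurd (h ▸ Finset.mem_insert_self 0 _) (h0 E)
    · exact absurd (h.symm ▸ Finset.mem_insert_self 0 _) (h0 E')
    · have h2 : (E.map (Fin.succEmb n)).erase 0 = (E'.map (Fin.succEmb n)).erase 0 := by
        rw [← Finset.erase_insert (h0 E), ← Finset.erase_insert (h0 E'), h]
      rw [Finset.erase_eq_of_notMem (h0 E), Finset.erase_eq_of_notMem (h0 E')] at h2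
      simp [hmapinj h2]
  have hbij : Function.Bijective e := by
    rw [Fintype.bijective_iff_injective_and_card]
    refine ⟨hinj, ?_⟩
    simp [Fintype.card_finset, pow_succ, mul_comm]
  rw [← Fintype.sum_bijective e hbij (fun p => G (e p)) G (fun _ => rfl)]
  rw [Fintype.sum_prod_type]
  rw [Fintype.sum_bool]
  rw [← Finset.sum_add_distrib]
  simp [he]

lemma sort_map_succ {n : ℕ} (E : Finset (Fin n)) :
    (E.map (Fin.succEmb n)).sort (· ≤ ·) = (E.sort (· ≤ ·)).map Fin.succ := by
  have hperm : List.Perm ((E.map (Fin.succEmb n)).sort (· ≤ ·))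
      ((E.sort (· ≤ ·)).map Fin.succ) := by
    rw [← Multiset.coe_eq_coe]
    have h1 := Finset.sort_eq (E.map (Fin.succEmb n)) (· ≤ ·)
    have h2 := Finset.sort_eq (α := Fin n) E (· ≤ ·)
    rw [h1, Finset.map_val, ← Multiset.map_coe, h2]
    rfl
  exact List.Perm.eq_of_pairwise' (Finset.pairwise_sort _ _)
    (List.Pairwise.map _ (fun _ _ h => Fin.succ_le_succ_iff.mpr h) (Finset.pairwise_sort _ _)) hperm

lemma word_map {B : Type*} (i : B) (t : List B) (S : Finset (Fin t.length)) :
    ((S.map (Fin.succEmb t.length)).sort (· ≤ ·)).map (i :: t).get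
      = (S.sort (· ≤ ·)).map t.get := by
  rw [sort_map_succ, List.map_map]
  exact List.map_congr_left (fun k _ => List.get_cons_succ')

lemma word_insert_zero {B : Type*} (i : B) (t : List B) (S : Finset (Fin t.length)) :
    ((insert (0 : Fin (t.length + 1)) (S.map (Fin.succEmb t.length))).sort (· ≤ ·)).map
        (i :: t).get
      = i :: (S.sort (· ≤ ·)).map t.get := by
  have h0 : (0 : Fin (t.length+1)) ∉ S.map (Fin.succEmb t.length) := by
    intro hmem
    rcases Finset.mem_map.mp hmem with ⟨a, _, ha⟩
    exact Fin.succ_ne_zero a ha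
  rw [Finset.sort_insert (· ≤ ·) (fun b _ => Fin.zero_le b) h0, List.map_cons, word_map]
  rfl

lemma filter_lt_zero {n : ℕ} (S : Finset (Fin (n+1))) :
    S.filter (fun j => j < (0 : Fin (n+1))) = ∅ := by
  apply Finset.filter_false_of_mem
  intro x _
  exact Fin.not_lt_zero x

lemma filter_map_lt_succ {n : ℕ} (E : Finset (Fin n)) (k : Fin n) :
    (E.map (Fin.succEmb n)).filter (fun j => j < k.succ)
      = (E.filter (fun j => j < k)).map (Fin.succEmb n) := by
  ext x
  simp only [Finset.mem_filter, Finset.mem_map, Fin.coe_succEmb]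
  constructor
  · rintro ⟨⟨a, ha, rfl⟩, hlt⟩
    exact ⟨a, ⟨ha, Fin.succ_lt_succ_iff.mp hlt⟩, rfl⟩
  · rintro ⟨a, ⟨ha, hlt⟩, rfl⟩
    exact ⟨⟨a, ha, rfl⟩, Fin.succ_lt_succ_iff.mpr hlt⟩

lemma filter_insert_lt_succ {n : ℕ} (E : Finset (Fin n)) (k : Fin n) :
    (insert (0 : Fin (n+1)) (E.map (Fin.succEmb n))).filter (fun j => j < k.succ)
      = insert (0 : Fin (n+1)) ((E.filter (fun j => j < k)).map (Fin.succEmb n)) := by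
  rw [Finset.filter_insert, if_pos (Fin.succ_pos k), filter_map_lt_succ]

lemma length_wordProd_parity {B W : Type*} [Group W] {M : CoxeterMatrix B}
    (cs : CoxeterSystem M W) (m : List B) :
    ((cs.length (cs.wordProd m) : ZMod 2)) = (m.length : ZMod 2) := by
  have h := cs.lengthParity_eq_ofAdd_length (cs.wordProd m)
  have h2 : cs.lengthParity (cs.wordProd m) = Multiplicative.ofAdd (m.length : ZMod 2) := by
    rw [CoxeterSystem.wordProd, map_list_prod, List.map_map,
      CoxeterSystem.lengthParity_comp_simple, List.map_const', List.prod_replicate,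
      ← ofAdd_nsmul]
    simp [nsmul_eq_mul]
  have := h.symm.trans h2
  exact Multiplicative.ofAdd.injective this

lemma neg_one_pow_sub_congr {Q : Type*} [Monoid Q] [HasDistribNeg Q] {a b c : ℕ}
    (hb : b ≤ a) (hc : c ≤ a) (h : (b : ZMod 2) = (c : ZMod 2)) :
    (-1 : Q) ^ (a - b) = (-1 : Q) ^ (a - c) := by
  have hmod : b % 2 = c % 2 := (ZMod.natCast_eq_natCast_iff b c 2).mp h
  have hbc : Even b ↔ Even c := by
    rw [Nat.even_iff, Nat.even_iff, hmod]
  have : Even (a - b) ↔ Even (a - c) := by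
    rw [Nat.even_sub hb, Nat.even_sub hc, hbc]
  rcases Nat.even_or_odd (a - b) with he | ho
  · rw [he.neg_one_pow, (this.mp he).neg_one_pow]
  · rw [ho.neg_one_pow, (Nat.not_even_iff_odd.symm.mpr (fun hev => Nat.not_even_iff_odd.symm.mp ho
      (this.mpr hev))).neg_one_pow]

open Classical in
theorem YExpand
    {B W : Type*} [Group W] {M : CoxeterMatrix B} (cs : CoxeterSystem M W)
    {F Q Λ : Type*} [CommRing F] [CommRing Q] [Algebra F Q]
    [AddCommGroup Λ] [Module F Λ]
    (act : W →* RingAut Q) (ιΛ : Λ →ₗ[F] Q) (αroot : B → Λ)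
    {A : Type*} [Ring A] [Module Q A]
    (ι : Q →+* A) (δ : W →* A)
    (hδι : ∀ (w : W) (q : Q), δ w * ι q = ι (act w q) * δ w)
    (l : List B) :
    (l.map (fun i =>
          ι (Ring.inverse (ιΛ (αroot i))) * (δ (cs.simple i) - δ 1))).prod
      = ∑ E : Finset (Fin l.length),
          ι ((-1 : Q) ^ (l.length - E.card) *
            ∏ k : Fin l.length,
              Ring.inverse
                (act (cs.wordProd (((E.filter (fun j => j < k)).sort (· ≤ ·)).map l.get))
                  (ιΛ (αroot (l.get k))))) *
          δ (cs.wordProd ((E.sort (· ≤ ·)).map l.get)) := by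
  induction l with
  | nil =>
    haveI : Unique (Finset (Fin 0)) :=
      ⟨⟨∅⟩, fun E => by ext x; exact x.elim0⟩
    rw [List.map_nil, List.prod_nil]
    simp only [List.length_nil]
    rw [show (Finset.univ : Finset (Finset (Fin 0))) = {∅} by
      ext E
      simp only [Finset.mem_univ, Finset.mem_singleton, true_iff]
      exact Subsingleton.elim E ∅]
    rw [Finset.sum_singleton]
    simp [CoxeterSystem.wordProd_nil]
  | cons i t ih =>
    rw [List.map_cons, List.prod_cons, ih, Finset.mul_sum]
    simp only [List.length_cons]
    rw [finset_fin_succ_sum (n := t.length)]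
    apply Finset.sum_congr rfl
    intro E _
    set a : Q := Ring.inverse (ιΛ (αroot i)) with ha
    set s : W := cs.simple i with hs
    set cE : Q := (-1 : Q) ^ (t.length - E.card) *
      ∏ k : Fin t.length,
        Ring.inverse
          (act (cs.wordProd (((E.filter (fun j => j < k)).sort (· ≤ ·)).map t.get))
            (ιΛ (αroot (t.get k)))) with hcE
    set vE : W := cs.wordProd ((E.sort (· ≤ ·)).map t.get) with hvE
    set PE : Q := ∏ k : Fin t.length,
        Ring.inverse
          (act (cs.wordProd (((E.filter (fun j => j < k)).sort (· ≤ ·)).map t.get))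
            (ιΛ (αroot (t.get k)))) with hPE
    -- LHS
    have hLHS : ι a * (δ s - δ 1) * (ι cE * δ vE)
        = ι (a * act s cE) * δ (s * vE) - ι (a * cE) * δ vE := by
      rw [map_one, mul_sub, mul_one, sub_mul]
      congr 1
      · calc ι a * δ s * (ι cE * δ vE) = ι a * (δ s * ι cE * δ vE) := by noncomm_ring
          _ = ι a * (ι ((act s) cE) * δ s * δ vE) := by rw [hδι]
          _ = ι (a * (act s) cE) * δ (s * vE) := by
              rw [map_mul ι, map_mul δ]; noncomm_ring
      · rw [← mul_assoc, ← map_mul ι]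
    rw [hLHS]
    have hcard : E.card ≤ t.length := le_trans (Finset.card_le_univ E) (by simp)
    -- True branch
    have hwordT : ((insert (0 : Fin (t.length+1)) (E.map (Fin.succEmb t.length))).sort
          (· ≤ ·)).map (i :: t).get = i :: (E.sort (· ≤ ·)).map t.get :=
      word_insert_zero i t E
    have hcardT : (insert (0 : Fin (t.length+1)) (E.map (Fin.succEmb t.length))).card
        = E.card + 1 := by
      rw [Finset.card_insert_of_notMem, Finset.card_map]
      intro hmem
      rcases Finset.mem_map.mp hmem with ⟨x, _, hx⟩
      exact Fin.succ_ne_zero x hx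
    have hprodT : (∏ k : Fin (t.length+1),
          Ring.inverse
            (act (cs.wordProd ((((insert (0 : Fin (t.length+1))
                  (E.map (Fin.succEmb t.length))).filter (fun j => j < k)).sort (· ≤ ·)).map
                (i :: t).get))
              (ιΛ (αroot ((i :: t).get k)))))
        = a * act s PE := by
      rw [Fin.prod_univ_succ]
      congr 1
      · rw [filter_lt_zero, Finset.sort_empty, List.map_nil, CoxeterSystem.wordProd_nil,
          map_one]
        rfl
      · rw [hPE, map_prod]
        apply Finset.prod_congr rfl
        intro k _
        rw [filter_insert_lt_succ, word_insert_zero i t, CoxeterSystem.wordProd_cons,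
          map_mul]
        rw [show ((i :: t).get k.succ) = t.get k from List.get_cons_succ']
        rw [← ringaut_inverse (act (cs.simple i))]
        rfl
    -- False branch
    have hwordF : ((E.map (Fin.succEmb t.length)).sort (· ≤ ·)).map (i :: t).get
        = (E.sort (· ≤ ·)).map t.get := word_map i t E
    have hprodF : (∏ k : Fin (t.length+1),
          Ring.inverse
            (act (cs.wordProd ((((E.map (Fin.succEmb t.length)).filter
                  (fun j => j < k)).sort (· ≤ ·)).map (i :: t).get))
              (ιΛ (αroot ((i :: t).get k)))))
        = a * PE := by
      rw [Fin.prod_univ_succ]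
      congr 1
      · rw [filter_lt_zero, Finset.sort_empty, List.map_nil, CoxeterSystem.wordProd_nil,
          map_one]
        rfl
      · rw [hPE]
        apply Finset.prod_congr rfl
        intro k _
        rw [filter_map_lt_succ, word_map i t]
        rw [show ((i :: t).get k.succ) = t.get k from List.get_cons_succ']
    rw [hwordT, hcardT, hprodT, hwordF, Finset.card_map, hprodF]
    rw [CoxeterSystem.wordProd_cons, ← hs, ← hvE]
    rw [Nat.succ_sub_succ t.length E.card]
    rw [show t.length + 1 - E.card = (t.length - E.card) + 1 from Nat.succ_sub hcard]
    rw [pow_succ, hcE]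
    rw [show a * (act s) ((-1 : Q) ^ (t.length - E.card) * PE)
        = (-1 : Q) ^ (t.length - E.card) * (a * (act s) PE) by
      rw [map_mul, map_pow, map_neg, map_one]; ring]
    rw [show ((-1 : Q) ^ (t.length - E.card) * -1) * (a * PE)
        = -(a * ((-1 : Q) ^ (t.length - E.card) * PE)) by ring]
    rw [map_neg ι, neg_mul, ← sub_eq_add_neg]

open Classical in
theorem pushpull_coefficient_formula
    {B W : Type*} [Group W] {M : CoxeterMatrix B} (cs : CoxeterSystem M W)
    {F Q Λ : Type*} [CommRing F] [CommRing Q] [Algebra F Q]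
    [AddCommGroup Λ] [Module F Λ]
    (act : W →* RingAut Q) (ιΛ : Λ →ₗ[F] Q)
    (αroot : B → Λ)
    (hαinv : ∀ (u : W) (i : B), IsUnit (act u (ιΛ (αroot i))))
    {A : Type*} [Ring A] [Module Q A]
    (ι : Q →+* A) (δ : W →* A)
    (hsmul : ∀ (q : Q) (a : A), q • a = ι q * a)
    (hδι : ∀ (w : W) (q : Q), δ w * ι q = ι (act w q) * δ w)
    (bδ : Module.Basis W Q A) (hbδ : ∀ w, (bδ w : A) = δ w)
    (Y : W → A)
    (hY : ∀ l : List B, cs.IsReduced l →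
      Y (cs.wordProd l) =
        (l.map (fun i =>
          ι (Ring.inverse (ιΛ (αroot i))) * (δ (cs.simple i) - δ 1))).prod)
    (c : W → W → Q) (hc : ∀ w v, c w v = bδ.repr (Y w) v)
    (w : W) (l : List B) (hl : cs.IsReduced l) (hlw : cs.wordProd l = w)
    (v : W) :
    c w v = (-1 : Q) ^ (cs.length w - cs.length v) *
      ∑ E : Finset (Fin l.length),
        if cs.wordProd ((E.sort (· ≤ ·)).map l.get) = v
          then ∏ k : Fin l.length,
            Ring.inverse
              (act (cs.wordProd (((E.filter (fun j => j < k)).sort (· ≤ ·)).map l.get))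
                (ιΛ (αroot (l.get k))))
          else 0 := by
  subst hlw
  rw [hc, hY l hl, YExpand cs act ιΛ αroot ι δ hδι l]
  rw [map_sum, Finset.sum_apply']
  have hterm : ∀ E : Finset (Fin l.length),
      (bδ.repr (ι ((-1 : Q) ^ (l.length - E.card) *
          ∏ k : Fin l.length,
            Ring.inverse
              (act (cs.wordProd (((E.filter (fun j => j < k)).sort (· ≤ ·)).map l.get))
                (ιΛ (αroot (l.get k))))) *
        δ (cs.wordProd ((E.sort (· ≤ ·)).map l.get)))) v
      = if cs.wordProd ((E.sort (· ≤ ·)).map l.get) = v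
          then (-1 : Q) ^ (l.length - E.card) *
            ∏ k : Fin l.length,
              Ring.inverse
                (act (cs.wordProd (((E.filter (fun j => j < k)).sort (· ≤ ·)).map l.get))
                  (ιΛ (αroot (l.get k))))
          else 0 := by
    intro E
    rw [← hsmul, ← hbδ, map_smul, Finsupp.smul_apply, Module.Basis.repr_self,
      Finsupp.single_apply, smul_eq_mul, mul_ite, mul_one, mul_zero]
  rw [Finset.sum_congr rfl (fun E _ => hterm E), Finset.mul_sum]
  refine Finset.sum_congr rfl ?_
  intro E _
  by_cases h : cs.wordProd ((E.sort (· ≤ ·)).map l.get) = v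
  · rw [if_pos h, if_pos h]
    have hr : cs.length (cs.wordProd l) = l.length := hl
    rw [hr]
    congr 1
    have hlen : ((E.sort (· ≤ ·)).map l.get).length = E.card := by
      rw [List.length_map, Finset.length_sort]
    have hb : E.card ≤ l.length := le_trans (Finset.card_le_univ E) (by simp)
    have hc1 : cs.length v ≤ l.length := by
      rw [← h]
      exact le_trans (le_trans (cs.length_wordProd_le _) (le_of_eq hlen)) hb
    have hpar : ((E.card : ZMod 2)) = (cs.length v : ZMod 2) := by
      rw [← h, length_wordProd_parity cs _, hlen]
    exact neg_one_pow_sub_congr hb hc1 hpar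
  · rw [if_neg h, if_neg h, mul_zero]
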